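/- arXiv:1611.05590 — 2 statements merged into one kernel-verified Lean document; each statement's English description precedes it below -/
import Mathlib

section
/- Let λ > 0 and K be a positive integer. Define P(ξ) = (1/2)[1 + erf((ξ - 0.5 - λ)/√(2λ))]. Then the function ξ ↦ P(ξ)^K is convex on the interval ξ ≤ λ + 0.5. -/
/-- The Gauss error function `erf z = (2/√π) ∫_0^z e^{-t²} dt`. -/
noncomputable def erf (z : ℝ) : ℝ := (2 / Real.sqrt Real.pi) * ∫ t in (0:ℝ)..z, Real.exp (-t ^ 2)

open MeasureTheory Set

lemma exp_neg_sq_continuous : Continuous fun t : ℝ => Real.exp (-t ^ 2) :=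
  Real.continuous_exp.comp (continuous_pow 2).neg

lemma erf_hasDerivAt (z : ℝ) :
    HasDerivAt erf (2 / Real.sqrt Real.pi * Real.exp (-z ^ 2)) z := by
  have hc := exp_neg_sq_continuous
  have h : HasDerivAt (fun u : ℝ => ∫ t in (0:ℝ)..u, Real.exp (-t ^ 2))
      (Real.exp (-z ^ 2)) z :=
    intervalIntegral.integral_hasDerivAt_right (hc.intervalIntegrable 0 z)
      (hc.stronglyMeasurableAtFilter _ _) hc.continuousAt
  exact h.const_mul (2 / Real.sqrt Real.pi)

lemma erf_deriv : deriv erf = fun z => 2 / Real.sqrt Real.pi * Real.exp (-z ^ 2) :=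
  funext fun z => (erf_hasDerivAt z).deriv

lemma integral_Iic_gaussian : ∫ x in Iic (0:ℝ), Real.exp (-x ^ 2) = Real.sqrt Real.pi / 2 := by
  have h0 : ∫ x in Iic (0:ℝ), Real.exp (-x ^ 2) = ∫ x in Ioi (0:ℝ), Real.exp (-x ^ 2) := by
    rw [show (Iic (0:ℝ)) = Iic (-(0:ℝ)) by norm_num, ← integral_comp_neg_Ioi]
    simp
  have h1 := integral_gaussian_Ioi 1
  simp only [neg_mul, one_mul, Real.sqrt_one, div_one] at h1
  rw [h0]
  simpa using h1

lemma erf_ge_neg_one {z : ℝ} (hz : z ≤ 0) : -1 ≤ erf z := by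
  have hpi : 0 < Real.sqrt Real.pi := Real.sqrt_pos.2 Real.pi_pos
  have hint : IntegrableOn (fun x : ℝ => Real.exp (-x ^ 2)) (Iic 0) := by
    have := (integrable_exp_neg_mul_sq (b := 1) one_pos).integrableOn (s := Iic (0:ℝ))
    simpa using this
  have hbound : ∫ t in z..(0:ℝ), Real.exp (-t ^ 2) ≤ Real.sqrt Real.pi / 2 := by
    rw [intervalIntegral.integral_of_le hz]
    calc ∫ t in Ioc z 0, Real.exp (-t ^ 2)
        ≤ ∫ t in Iic (0:ℝ), Real.exp (-t ^ 2) := by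
          apply setIntegral_mono_set hint
          · exact Filter.Eventually.of_forall fun t => (Real.exp_pos _).le
          · exact Filter.Eventually.of_forall fun t ht => ht.2
      _ = Real.sqrt Real.pi / 2 := integral_Iic_gaussian
  have hsymm : ∫ t in (0:ℝ)..z, Real.exp (-t ^ 2) = -∫ t in z..(0:ℝ), Real.exp (-t ^ 2) :=
    intervalIntegral.integral_symm z 0
  have h2 : 2 / Real.sqrt Real.pi * ∫ t in z..(0:ℝ), Real.exp (-t ^ 2) ≤ 1 := by
    calc 2 / Real.sqrt Real.pi * ∫ t in z..(0:ℝ), Real.exp (-t ^ 2)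
        ≤ 2 / Real.sqrt Real.pi * (Real.sqrt Real.pi / 2) :=
          mul_le_mul_of_nonneg_left hbound (by positivity)
      _ = 1 := by field_simp
  unfold erf
  rw [hsymm, mul_neg]
  linarith

lemma erf_convexOn : ConvexOn ℝ (Iic (0:ℝ)) erf := by
  have hdiff : Differentiable ℝ erf := fun z => (erf_hasDerivAt z).differentiableAt
  have hderiv2 : ∀ x : ℝ, HasDerivAt (deriv erf)
      (2 / Real.sqrt Real.pi * (Real.exp (-x ^ 2) * (-(2 * x)))) x := by
    intro x
    rw [erf_deriv]
    have h : HasDerivAt (fun z : ℝ => Real.exp (-z ^ 2)) (Real.exp (-x ^ 2) * (-(2 * x))) x := by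
      have := ((hasDerivAt_pow 2 x).neg).exp
      simpa [mul_comm] using this
    exact h.const_mul _
  refine convexOn_of_deriv2_nonneg (convex_Iic 0) hdiff.continuous.continuousOn
    hdiff.differentiableOn (fun x _ => ((hderiv2 x).differentiableAt).differentiableWithinAt) ?_
  intro x hx
  rw [interior_Iic] at hx
  have hx0 : x < 0 := hx
  have : deriv (deriv erf) x = 2 / Real.sqrt Real.pi * (Real.exp (-x ^ 2) * (-(2 * x))) :=
    (hderiv2 x).deriv
  simp only [Function.iterate_succ, Function.iterate_zero, Function.comp_apply, Function.id_def]
  rw [this]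
  exact mul_nonneg (by positivity)
    (mul_nonneg (Real.exp_pos _).le (by linarith))

theorem Pmd_pow_convex (lam : ℝ) (hlam : 0 < lam) (K : ℕ) (hK : 1 ≤ K) :
    ConvexOn ℝ (Set.Iic (lam + 0.5))
      (fun ξ : ℝ => ((1 / 2) * (1 + erf ((ξ - 0.5 - lam) / Real.sqrt (2 * lam)))) ^ K) := by
  set A := Real.sqrt (2 * lam) with hA
  have hA0 : 0 < A := Real.sqrt_pos.2 (by linarith)
  set P : ℝ → ℝ := fun ξ => (1 / 2) * (1 + erf ((ξ - 0.5 - lam) / A)) with hP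
  have hmem : ∀ x ∈ Set.Iic (lam + 0.5), (x - 0.5 - lam) / A ∈ Iic (0:ℝ) := by
    intro x hx
    have : x - 0.5 - lam ≤ 0 := by simp at hx ⊢; linarith
    exact div_nonpos_of_nonpos_of_nonneg this hA0.le
  have hPconv : ConvexOn ℝ (Set.Iic (lam + 0.5)) P := by
    refine ⟨convex_Iic _, ?_⟩
    intro x hx y hy a b ha hb hab
    have hgx := hmem x hx
    have hgy := hmem y hy
    have key : a * x + b * y - 0.5 - lam = a * (x - 0.5 - lam) + b * (y - 0.5 - lam) := by
      linear_combination ((0.5:ℝ) + lam) * hab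
    have key2 : (a * x + b * y - 0.5 - lam) / A
        = a * ((x - 0.5 - lam) / A) + b * ((y - 0.5 - lam) / A) := by
      rw [key, add_div, mul_div_assoc, mul_div_assoc]
    have herf := erf_convexOn.2 hgx hgy ha hb hab
    simp only [smul_eq_mul] at herf ⊢
    rw [hP]
    dsimp only
    rw [key2]
    linarith
  have hPnonneg : ∀ ⦃x⦄, x ∈ Set.Iic (lam + 0.5) → 0 ≤ P x := by
    intro x hx
    have := erf_ge_neg_one (hmem x hx)
    rw [hP]
    dsimp only
    linarith
  exact hPconv.pow hPnonneg K
end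

section
/- Let λ > 0 and K be a positive integer. Define F(ξ) = 1 - (1/2)[1 + erf((ξ - 0.5 - λ)/√(2λ))]. Then the function ξ ↦ F(ξ)^K is convex on the interval ξ ≥ λ + 0.5. -/
lemma hasDerivAt_erf (z : ℝ) :
    HasDerivAt erf ((2 / Real.sqrt Real.pi) * Real.exp (-z ^ 2)) z := by
  have hc : Continuous fun t : ℝ => Real.exp (-t ^ 2) := by continuity
  have h := intervalIntegral.integral_hasDerivAt_right
      (hc.intervalIntegrable 0 z)
      (hc.stronglyMeasurableAtFilter _ _)
      hc.continuousAt
  exact h.const_mul (2 / Real.sqrt Real.pi)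

lemma erf_le_one {z : ℝ} (hz : 0 ≤ z) : erf z ≤ 1 := by
  have hc : Continuous fun t : ℝ => Real.exp (-t ^ 2) := by continuity
  have hint : MeasureTheory.IntegrableOn (fun t : ℝ => Real.exp (-t ^ 2)) (Set.Ioi 0) := by
    have := (integrableOn_Ioi_exp_neg_mul_sq_iff (b := 1)).2 one_pos
    simpa using this
  have hIoi : ∫ t in Set.Ioi (0:ℝ), Real.exp (-t ^ 2) = Real.sqrt Real.pi / 2 := by
    have := integral_gaussian_Ioi 1
    simpa using this
  have hle : ∫ t in (0:ℝ)..z, Real.exp (-t ^ 2) ≤ Real.sqrt Real.pi / 2 := by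
    rw [intervalIntegral.integral_of_le hz, ← hIoi]
    apply MeasureTheory.setIntegral_mono_set hint
    · filter_upwards with t using (Real.exp_pos _).le
    · filter_upwards with t ht using ht.1
  have hπ : 0 < Real.sqrt Real.pi := Real.sqrt_pos.2 Real.pi_pos
  calc erf z ≤ (2 / Real.sqrt Real.pi) * (Real.sqrt Real.pi / 2) := by
        exact mul_le_mul_of_nonneg_left hle (by positivity)
    _ = 1 := by field_simp
  
theorem Pfa_pow_convex (lam : ℝ) (hlam : 0 < lam) (K : ℕ) (hK : 1 ≤ K) :
    ConvexOn ℝ (Set.Ici (lam + 0.5))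
      (fun ξ : ℝ => (1 - (1 / 2) * (1 + erf ((ξ - 0.5 - lam) / Real.sqrt (2 * lam)))) ^ K) := by
  set σ : ℝ := Real.sqrt (2 * lam) with hσdef
  have hσ : 0 < σ := Real.sqrt_pos.2 (by linarith)
  set F : ℝ → ℝ := fun ξ => 1 - (1 / 2) * (1 + erf ((ξ - 0.5 - lam) / σ)) with hF
  -- derivative of F
  have hFderiv : ∀ ξ : ℝ, HasDerivAt F
      (-(1 / Real.sqrt Real.pi) * Real.exp (-(((ξ - 0.5 - lam) / σ)) ^ 2) / σ) ξ := by
    intro ξ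
    have hu : HasDerivAt (fun x : ℝ => (x - 0.5 - lam) / σ) (1 / σ) ξ := by
      have : HasDerivAt (fun x : ℝ => x - 0.5 - lam) 1 ξ :=
        ((hasDerivAt_id ξ).sub_const 0.5).sub_const lam
      simpa [div_eq_mul_inv] using this.div_const σ
    have herf := (hasDerivAt_erf ((ξ - 0.5 - lam) / σ)).comp ξ hu
    have h1 : HasDerivAt (fun x : ℝ => 1 + erf ((x - 0.5 - lam) / σ))
        ((2 / Real.sqrt Real.pi) * Real.exp (-(((ξ - 0.5 - lam) / σ)) ^ 2) * (1 / σ)) ξ :=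
      herf.const_add 1
    have h2 := (h1.const_mul (1 / 2 : ℝ)).const_sub 1
    refine h2.congr_deriv ?_
    ring
  have hFdiff : Differentiable ℝ F := fun ξ => (hFderiv ξ).differentiableAt
  have hderiv_eq : ∀ ξ : ℝ, deriv F ξ =
      -(1 / Real.sqrt Real.pi) * Real.exp (-(((ξ - 0.5 - lam) / σ)) ^ 2) / σ :=
    fun ξ => (hFderiv ξ).deriv
  -- F is convex on Ici (lam + 0.5)
  have hFconv : ConvexOn ℝ (Set.Ici (lam + 0.5)) F := by
    apply MonotoneOn.convexOn_of_deriv (convex_Ici _)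
      hFdiff.continuous.continuousOn hFdiff.differentiableOn
    intro x hx y hy hxy
    rw [interior_Ici] at hx hy
    rw [hderiv_eq, hderiv_eq]
    have hux : 0 ≤ (x - 0.5 - lam) / σ := by
      apply div_nonneg _ hσ.le
      have : lam + 0.5 < x := hx
      linarith
    have huxy : (x - 0.5 - lam) / σ ≤ (y - 0.5 - lam) / σ := by
      gcongr
    have hexp : Real.exp (-(((y - 0.5 - lam) / σ)) ^ 2)
        ≤ Real.exp (-(((x - 0.5 - lam) / σ)) ^ 2) := by
      apply Real.exp_le_exp.2
      have : ((x - 0.5 - lam) / σ) ^ 2 ≤ ((y - 0.5 - lam) / σ) ^ 2 :=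
        pow_le_pow_left₀ hux huxy 2
      linarith
    have hπ : 0 < Real.sqrt Real.pi := Real.sqrt_pos.2 Real.pi_pos
    have hc : 0 < (1 / Real.sqrt Real.pi) / σ := by positivity
    simp only [neg_mul, neg_div, neg_le_neg_iff]
    gcongr
  -- F is nonnegative on Ici (lam + 0.5)
  have hFnonneg : ∀ ξ ∈ Set.Ici (lam + 0.5), 0 ≤ F ξ := by
    intro ξ hξ
    have hu : 0 ≤ (ξ - 0.5 - lam) / σ := by
      apply div_nonneg _ hσ.le
      have : lam + 0.5 ≤ ξ := hξ
      linarith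
    have := erf_le_one hu
    simp only [hF]
    linarith
  have := hFconv.pow hFnonneg K
  exact this
end
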